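/- Let γ ∈ (1/2, 1), set f = ⌈1/(1−γ^{1/3})⌉, let n ≥ 2f + 2 be an integer, and let T = 2^{n−2f−1}. Let μ be the product measure on Fin T → Bool in which each coordinate is an independent fair Bernoulli(1/2) bit, and in the lower-bound chain with n states and MDP M(1) let S_0, …, S_T be the trajectory from state 1 driven by these random bits. Then the expected average optimal value of the visited states satisfies 1/(1−γ) − E_μ[(1/T)·Σ_{t=1}^{T} V*(S_t)] > 1/(4·(1−γ)). -/

import Mathlib

open MeasureTheory

/-- The deterministic trajectory in the lower-bound chain with states `{1, …, n}`:
from state `s`, action `true` moves right (capped at `n`), action `false` resets to `1`. -/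
def traj (n : ℕ) (a : ℕ → Bool) (s : ℕ) : ℕ → ℕ
  | 0 => s
  | t + 1 => if a t then min (traj n a s t + 1) n else 1

/-- The reward of a state in the MDP `M(1)`: `1/2` at states `1, …, n-1` and `1` at state `n`. -/
noncomputable def reward (n : ℕ) (s : ℕ) : ℝ := if s < n then 1 / 2 else 1

/-- The `γ`-discounted reward of the action sequence `a` started from state `s`. -/
noncomputable def discReward (n : ℕ) (γ : ℝ) (a : ℕ → Bool) (s : ℕ) : ℝ :=
  ∑' t : ℕ, γ ^ t * reward n (traj n a s t)

/-- The optimal value `V*(s)`: the supremum of the `γ`-discounted reward over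
all action sequences. -/
noncomputable def Vstar (n : ℕ) (γ : ℝ) (s : ℕ) : ℝ :=
  ⨆ a : ℕ → Bool, discReward n γ a s


lemma traj_le_add (n : ℕ) (a : ℕ → Bool) (s t : ℕ) : traj n a s t ≤ s + t := by
  induction t with
  | zero => simp [traj]
  | succ t ih =>
    simp only [traj]
    split
    · exact le_trans (min_le_left _ _) (by omega)
    · omega

lemma traj_run (n : ℕ) (a : ℕ → Bool) :
    ∀ t j, j < t → a (t - 1 - j) = false → traj n a 1 t ≤ j + 1 := by
  intro t
  induction t with
  | zero => exact fun j hj _ => absurd hj (Nat.not_lt_zero j)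
  | succ t ih =>
    intro j hj hfalse
    match j with
    | 0 =>
      have h : a t = false := by simpa using hfalse
      simp [traj, h]
    | j + 1 =>
      rw [show t + 1 - 1 - (j + 1) = t - 1 - j by omega] at hfalse
      have h1 : traj n a 1 t ≤ j + 1 := ih j (by omega) hfalse
      simp only [traj]
      split
      · exact le_trans (min_le_left _ _) (by omega)
      · omega

lemma discReward_le (n : ℕ) {γ : ℝ} (hγ0 : 0 < γ) (hγ1 : γ < 1) (a : ℕ → Bool) (s : ℕ) :
    discReward n γ a s ≤ (1 + γ ^ (n - s)) / (2 * (1 - γ)) := by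
  have hgeo : Summable (fun t : ℕ => γ ^ t) := summable_geometric_of_lt_one hγ0.le hγ1
  have hsum1 : Summable (fun t : ℕ => γ ^ t * (1/2 : ℝ)) := hgeo.mul_right _
  have hsum2 : Summable (fun t : ℕ => if n - s ≤ t then γ ^ t * (1/2 : ℝ) else 0) := by
    apply Summable.of_nonneg_of_le (fun t => by positivity) _ hgeo
    intro t
    have hp : (0:ℝ) < γ ^ t := pow_pos hγ0 t
    split
    · nlinarith
    · positivity
  have hle : ∀ t : ℕ, γ ^ t * reward n (traj n a s t)
      ≤ γ ^ t * (1/2) + (if n - s ≤ t then γ ^ t * (1/2 : ℝ) else 0) := by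
    intro t
    have hp : (0:ℝ) < γ ^ t := pow_pos hγ0 t
    by_cases h : traj n a s t < n
    · rw [reward, if_pos h]
      split
      · nlinarith
      · linarith
    · rw [reward, if_neg h]
      have ht : n - s ≤ t := by have := traj_le_add n a s t; omega
      rw [if_pos ht]
      nlinarith
  have hnn : ∀ t : ℕ, 0 ≤ γ ^ t * reward n (traj n a s t) := by
    intro t
    apply mul_nonneg (pow_pos hγ0 t).le
    rw [reward]; split <;> norm_num
  have hsumL : Summable (fun t : ℕ => γ ^ t * reward n (traj n a s t)) :=
    Summable.of_nonneg_of_le hnn hle (hsum1.add hsum2)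
  have h1γ : (1:ℝ) - γ ≠ 0 := by linarith
  calc discReward n γ a s
      ≤ ∑' t : ℕ, (γ ^ t * (1/2) + if n - s ≤ t then γ ^ t * (1/2 : ℝ) else 0) :=
        Summable.tsum_le_tsum hle hsumL (hsum1.add hsum2)
    _ = (∑' t : ℕ, γ ^ t * (1/2 : ℝ))
        + ∑' t : ℕ, (if n - s ≤ t then γ ^ t * (1/2 : ℝ) else 0) := Summable.tsum_add hsum1 hsum2
    _ = (1 + γ ^ (n - s)) / (2 * (1 - γ)) := by
        have e1 : (∑' t : ℕ, γ ^ t * (1/2 : ℝ)) = (1 - γ)⁻¹ * (1/2) := by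
          rw [tsum_mul_right, tsum_geometric_of_lt_one hγ0.le hγ1]
        have e2 : (∑' t : ℕ, (if n - s ≤ t then γ ^ t * (1/2 : ℝ) else 0))
            = (1 - γ)⁻¹ * (1/2) * γ ^ (n - s) := by
          rw [← hsum2.sum_add_tsum_nat_add (n - s)]
          have z : (∑ i ∈ Finset.range (n - s), if n - s ≤ i then γ ^ i * (1/2 : ℝ) else 0) = 0 :=
            Finset.sum_eq_zero fun i hi => if_neg (by have := Finset.mem_range.mp hi; omega)
          rw [z, zero_add]
          have e3 : ∀ i : ℕ, (if n - s ≤ i + (n - s) then γ ^ (i + (n - s)) * (1/2 : ℝ) else 0)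
              = γ ^ i * (1/2 : ℝ) * γ ^ (n - s) := by
            intro i
            rw [if_pos (Nat.le_add_left _ _), pow_add]
            ring
          rw [tsum_congr e3, tsum_mul_right, tsum_mul_right,
            tsum_geometric_of_lt_one hγ0.le hγ1]
        have h2 : (0:ℝ) < 1 - γ := by linarith
        have hinv : (1 - γ)⁻¹ * (1 - γ) = 1 := inv_mul_cancel₀ (ne_of_gt h2)
        rw [e1, e2, eq_div_iff (by positivity)]
        linear_combination (1 + γ ^ (n - s)) * hinv
  
lemma Vstar_le (n : ℕ) {γ : ℝ} (hγ0 : 0 < γ) (hγ1 : γ < 1) (s : ℕ) :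
    Vstar n γ s ≤ (1 + γ ^ (n - s)) / (2 * (1 - γ)) :=
  ciSup_le fun a => discReward_le n hγ0 hγ1 a s


lemma gamma_pow_f {γ : ℝ} (hγ : 1/2 < γ) (hγ1 : γ < 1) {f : ℕ}
    (hf : f = ⌈1 / (1 - γ ^ ((1:ℝ)/3))⌉₊) : γ ^ f ≤ 1/8 ∧ 1 ≤ f := by
  set x := γ ^ ((1:ℝ)/3) with hx
  have hγ0 : (0:ℝ) < γ := by linarith
  have hx0 : 0 < x := Real.rpow_pos_of_pos hγ0 _
  have hx1 : x < 1 := Real.rpow_lt_one hγ0.le hγ1 (by norm_num)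
  have h1x : 0 < 1 - x := by linarith
  have hfge : 1 / (1 - x) ≤ (f : ℝ) := hf ▸ Nat.le_ceil _
  have hf1 : 1 ≤ f := by
    rw [hf]; exact Nat.one_le_ceil_iff.mpr (by positivity)
  have hd : (0:ℝ) ≤ (1 - x)/x := by positivity
  have hber : 1 + (f:ℝ) * ((1-x)/x) ≤ (1 + (1-x)/x) ^ f := one_add_mul_le_pow (by linarith) f
  have hsum : 1 + (1-x)/x = x⁻¹ := by field_simp; ring
  have hfd : 1/x ≤ (f:ℝ) * ((1-x)/x) := by
    have h := mul_le_mul_of_nonneg_right hfge hd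
    have he : (1/(1-x)) * ((1-x)/x) = 1/x := by field_simp
    linarith [he ▸ h]
  have hx_le : (1:ℝ) ≤ 1/x := by rw [le_div_iff₀ hx0]; linarith
  have h2 : (2:ℝ) ≤ x⁻¹ ^ f := by
    rw [← hsum]
    have : (1:ℝ)/x = x⁻¹ := one_div x
    nlinarith
  have hxf : x ^ f ≤ 1/2 := by
    have hpos : (0:ℝ) < x⁻¹ ^ f := by positivity
    have : x ^ f = (x⁻¹ ^ f)⁻¹ := by rw [← inv_pow, inv_inv]
    rw [this]
    rw [show (1:ℝ)/2 = 2⁻¹ by norm_num]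
    exact inv_anti₀ (by norm_num) h2
  have hγx : x ^ (3:ℕ) = γ := by
    rw [hx, ← Real.rpow_natCast (γ ^ ((1:ℝ)/3)) 3, ← Real.rpow_mul hγ0.le]
    norm_num
  have hgf : γ ^ f = (x ^ f) ^ 3 := by
    rw [← hγx, ← pow_mul, ← pow_mul, Nat.mul_comm]
  constructor
  · rw [hgf]
    calc (x ^ f) ^ 3 ≤ (1/2:ℝ) ^ 3 := pow_le_pow_left₀ (by positivity) hxf 3
      _ = 1/8 := by norm_num
  · exact hf1

set_option maxHeartbeats 1000000 in
/-- probabilistic core of the paper's Theorem 1. Let `γ ∈ (1/2,1)`,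
`f = ⌈1/(1-γ^(1/3))⌉`, `n ≥ 2f + 2` and `T = 2^(n-2f-1)`. Under `T` independent fair coin
flips driving the chain with `n` states and MDP `M(1)` from state `1`, the expected average
optimal value of the visited states falls short of `1/(1-γ)` by more than `1/(4(1-γ))`. -/
theorem random_play_suboptimal (γ : ℝ) (hγ : 1 / 2 < γ) (hγ1 : γ < 1)
    (f : ℕ) (hf : f = ⌈1 / (1 - γ ^ ((1 : ℝ) / 3))⌉₊)
    (n : ℕ) (hn : 2 * f + 2 ≤ n)
    (T : ℕ) (hT : T = 2 ^ (n - 2 * f - 1)) :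
    1 / (1 - γ) -
      ∫ x : Fin T → Bool,
        (1 / (T : ℝ)) * ∑ t ∈ Finset.Icc 1 T,
          Vstar n γ (traj n (fun s => if h : s < T then x ⟨s, h⟩ else false) 1 t)
        ∂(Measure.pi fun _ : Fin T =>
            (PMF.bernoulli (1 / 2) (by norm_num)).toMeasure)
      > 1 / (4 * (1 - γ)) := by
  have hγ0 : (0:ℝ) < γ := by linarith
  have h1γ : (0:ℝ) < 1 - γ := by linarith
  obtain ⟨hγf, hf1⟩ := gamma_pow_f hγ hγ1 hf
  set μ : Measure (Fin T → Bool) := Measure.pi fun _ : Fin T =>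
    (PMF.bernoulli (1 / 2) (by norm_num)).toMeasure with hμ
  set A : (Fin T → Bool) → ℕ → Bool := fun x s => if h : s < T then x ⟨s, h⟩ else false with hA
  set k := n - f - 1 with hk
  have hkf : f + 1 ≤ k := by omega
  have hk2 : 2 ≤ k := by omega
  have hT1 : 1 ≤ T := by rw [hT]; exact Nat.one_le_two_pow
  have hT0 : (T:ℝ) ≠ 0 := by positivity
  -- measure of singletons
  have hsing : ∀ x : Fin T → Bool, μ {x} = (1/2 : ENNReal) ^ T := by
    intro x
    rw [hμ, ← Set.univ_pi_singleton x, Measure.pi_pi]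
    have h1 : ∀ i : Fin T,
        (PMF.bernoulli (1/2) (by norm_num)).toMeasure {x i} = 1/2 := by
      intro i
      rw [PMF.toMeasure_apply_singleton _ _ (measurableSet_singleton _), PMF.bernoulli_apply]
      cases x i
      · simp [ENNReal.one_sub_inv_two]
      · simp
    rw [Finset.prod_congr rfl (fun i _ => h1 i), Finset.prod_const]
    simp
  have hw : ∀ x : Fin T → Bool, (μ {x}).toReal = (1/2 : ℝ) ^ T := by
    intro x
    rw [hsing x, ENNReal.toReal_pow]
    norm_num
  have hhalfT : (0:ℝ) ≤ (1/2:ℝ)^T := by positivity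
  have hsum_const : ∑ _x : Fin T → Bool, (1/2:ℝ)^T = 1 := by
    rw [Finset.sum_const, Finset.card_univ, Fintype.card_fun, nsmul_eq_mul]
    push_cast
    simp only [Fintype.card_bool, Fintype.card_fin]
    rw [← mul_pow]
    norm_num
  -- key per-time bound
  have key : ∀ t ∈ Finset.Icc 1 T,
      ∑ x : Fin T → Bool, (1/2:ℝ)^T * γ ^ (n - traj n (A x) 1 t) ≤ 3/8 := by
    intro t ht
    obtain ⟨ht1, htT⟩ := Finset.mem_Icc.mp ht
    by_cases hcase : t < k
    · have hpt : ∀ x : Fin T → Bool, γ ^ (n - traj n (A x) 1 t) ≤ γ ^ f := by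
        intro x
        apply pow_le_pow_of_le_one hγ0.le hγ1.le
        have := traj_le_add n (A x) 1 t
        omega
      calc ∑ x : Fin T → Bool, (1/2:ℝ)^T * γ ^ (n - traj n (A x) 1 t)
          ≤ ∑ _x : Fin T → Bool, (1/2:ℝ)^T * γ ^ f :=
            Finset.sum_le_sum fun x _ => mul_le_mul_of_nonneg_left (hpt x) hhalfT
        _ = (∑ _x : Fin T → Bool, (1/2:ℝ)^T) * γ ^ f := by rw [← Finset.sum_mul]
        _ = γ ^ f := by rw [hsum_const, one_mul]
        _ ≤ 3/8 := by linarith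
    · push_neg at hcase
      set ι : ℕ → Fin T := fun j => ⟨t - 1 - j, by omega⟩ with hι
      set s : Finset (Fin T) := (Finset.range k).image ι with hs
      have hinj : Set.InjOn ι (Finset.range k) := by
        intro j1 h1 j2 h2 he
        have h1' := Finset.mem_coe.mp h1
        have h2' := Finset.mem_coe.mp h2
        have e1 := Finset.mem_range.mp h1'
        have e2 := Finset.mem_range.mp h2'
        have : t - 1 - j1 = t - 1 - j2 := congrArg Fin.val he
        omega
      have hcard : s.card = k := by
        rw [hs, Finset.card_image_of_injOn hinj, Finset.card_range]
      have hkT : k ≤ T := le_trans hcase htT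
      have hpt : ∀ x : Fin T → Bool, γ ^ (n - traj n (A x) 1 t)
          ≤ γ ^ f + ∏ i ∈ s, (if x i then (1:ℝ) else 0) := by
        intro x
        have hprod_nn : (0:ℝ) ≤ ∏ i ∈ s, (if x i then (1:ℝ) else 0) :=
          Finset.prod_nonneg fun i _ => by split <;> norm_num
        by_cases hS : traj n (A x) 1 t < n - f
        · have h := pow_le_pow_of_le_one hγ0.le hγ1.le
            (show f ≤ n - traj n (A x) 1 t by omega)
          linarith
        · push_neg at hS
          have hall : ∀ i ∈ s, x i = true := by
            intro i hi
            rw [hs] at hi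
            obtain ⟨j, hj, rfl⟩ := Finset.mem_image.mp hi
            have hjk := Finset.mem_range.mp hj
            by_contra hxi
            have hxi' : x (ι j) = false := Bool.eq_false_iff.mpr hxi
            have hfalse : A x (t - 1 - j) = false := by
              rw [hA]
              simp only
              rw [dif_pos (show t - 1 - j < T by omega)]
              exact hxi'
            have := traj_run n (A x) t j (by omega) hfalse
            omega
          have hp1 : (∏ i ∈ s, if x i then (1:ℝ) else 0) = 1 :=
            Finset.prod_eq_one fun i hi => by rw [hall i hi]; simp
          have hle1 : γ ^ (n - traj n (A x) 1 t) ≤ 1 := pow_le_one₀ hγ0.le hγ1.le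
          have hgfnn : (0:ℝ) ≤ γ ^ f := by positivity
          rw [hp1]
          linarith
      have hsum_prod : ∑ x : Fin T → Bool, ∏ i ∈ s, (if x i then (1:ℝ) else 0)
          = 2 ^ (T - k) := by
        have step : ∀ x : Fin T → Bool, (∏ i ∈ s, if x i then (1:ℝ) else 0)
            = ∏ i : Fin T, (if i ∈ s then (if x i then (1:ℝ) else 0) else 1) := by
          intro x
          have h1 : ∏ i ∈ s, (if i ∈ s then (if x i then (1:ℝ) else 0) else 1)
              = ∏ i : Fin T, (if i ∈ s then (if x i then (1:ℝ) else 0) else 1) :=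
            Finset.prod_subset (Finset.subset_univ s) (fun i _ hi => if_neg hi)
          rw [← h1]
          exact Finset.prod_congr rfl fun i hi => (if_pos hi).symm
        calc ∑ x : Fin T → Bool, ∏ i ∈ s, (if x i then (1:ℝ) else 0)
            = ∑ x : Fin T → Bool, ∏ i : Fin T,
                (if i ∈ s then (if x i then (1:ℝ) else 0) else 1) :=
              Finset.sum_congr rfl fun x _ => step x
          _ = ∏ i : Fin T, ∑ b : Bool, (if i ∈ s then (if b then (1:ℝ) else 0) else 1) := by
              rw [Fintype.prod_sum
                (fun (i : Fin T) (b : Bool) => if i ∈ s then (if b then (1:ℝ) else 0) else 1)]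
          _ = ∏ i : Fin T, (if i ∈ s then (1:ℝ) else 2) := by
              apply Finset.prod_congr rfl; intro i _
              by_cases hi : i ∈ s <;> simp [hi]
          _ = 2 ^ (T - k) := by
              rw [← Finset.prod_mul_prod_compl s,
                Finset.prod_congr rfl (fun i (hi : i ∈ s) => if_pos hi),
                Finset.prod_congr rfl
                  (fun i (hi : i ∈ sᶜ) => if_neg (Finset.mem_compl.mp hi)),
                Finset.prod_const_one, one_mul, Finset.prod_const,
                Finset.card_compl, hcard]
              simp
      have hhalf_prod : (1/2:ℝ)^T * (2:ℝ) ^ (T - k) = (1/2:ℝ)^k := by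
        have hsplit : (1/2:ℝ)^T = (1/2:ℝ)^k * (1/2:ℝ)^(T-k) := by
          rw [← pow_add]; congr 1; omega
        rw [hsplit, mul_assoc, ← mul_pow]
        norm_num
      calc ∑ x : Fin T → Bool, (1/2:ℝ)^T * γ ^ (n - traj n (A x) 1 t)
          ≤ ∑ x : Fin T → Bool,
              (1/2:ℝ)^T * (γ ^ f + ∏ i ∈ s, (if x i then (1:ℝ) else 0)) :=
            Finset.sum_le_sum fun x _ => mul_le_mul_of_nonneg_left (hpt x) hhalfT
        _ = (∑ _x : Fin T → Bool, (1/2:ℝ)^T * γ ^ f)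
            + (1/2:ℝ)^T * ∑ x : Fin T → Bool, ∏ i ∈ s, (if x i then (1:ℝ) else 0) := by
            rw [Finset.mul_sum]
            rw [← Finset.sum_add_distrib]
            apply Finset.sum_congr rfl; intro x _; ring
        _ = γ ^ f + (1/2:ℝ)^k := by
            rw [hsum_prod, hhalf_prod, ← Finset.sum_mul, hsum_const, one_mul]
        _ ≤ 3/8 := by
            have h4 : (1/2:ℝ)^k ≤ (1/2:ℝ)^2 :=
              pow_le_pow_of_le_one (by norm_num) (by norm_num) hk2
            norm_num at h4
            linarith
  -- assemble
  have hmain : ∫ x : Fin T → Bool,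
      (1/(T:ℝ)) * ∑ t ∈ Finset.Icc 1 T, Vstar n γ (traj n (A x) 1 t) ∂μ
      ≤ 11/16 * (1/(1-γ)) := by
    rw [integral_fintype (Integrable.of_finite)]
    have hhalf2 : 1/(2*(1-γ)) = (1/2) * (1/(1-γ)) := by
      rw [div_mul_div_comm]; norm_num
    calc ∑ x : Fin T → Bool, (μ {x}).toReal •
          ((1/(T:ℝ)) * ∑ t ∈ Finset.Icc 1 T, Vstar n γ (traj n (A x) 1 t))
        = ∑ x : Fin T → Bool, ∑ t ∈ Finset.Icc 1 T,
            (1/(T:ℝ)) * ((1/2:ℝ)^T * Vstar n γ (traj n (A x) 1 t)) := by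
          apply Finset.sum_congr rfl; intro x _
          rw [hw x, smul_eq_mul, Finset.mul_sum, Finset.mul_sum]
          apply Finset.sum_congr rfl; intro t _; ring
      _ = ∑ t ∈ Finset.Icc 1 T, ∑ x : Fin T → Bool,
            (1/(T:ℝ)) * ((1/2:ℝ)^T * Vstar n γ (traj n (A x) 1 t)) := Finset.sum_comm
      _ ≤ ∑ _t ∈ Finset.Icc 1 T, (1/(T:ℝ)) * (11/16 * (1/(1-γ))) := by
          apply Finset.sum_le_sum; intro t ht
          rw [← Finset.mul_sum]
          apply mul_le_mul_of_nonneg_left _ (by positivity)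
          have hv : ∀ x : Fin T → Bool, (1/2:ℝ)^T * Vstar n γ (traj n (A x) 1 t)
              ≤ (1/(2*(1-γ))) *
                ((1/2:ℝ)^T + (1/2:ℝ)^T * γ ^ (n - traj n (A x) 1 t)) := by
            intro x
            have h1 := Vstar_le n hγ0 hγ1 (traj n (A x) 1 t)
            calc (1/2:ℝ)^T * Vstar n γ (traj n (A x) 1 t)
                ≤ (1/2:ℝ)^T * ((1 + γ ^ (n - traj n (A x) 1 t)) / (2*(1-γ))) :=
                  mul_le_mul_of_nonneg_left h1 hhalfT
              _ = (1/(2*(1-γ))) *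
                  ((1/2:ℝ)^T + (1/2:ℝ)^T * γ ^ (n - traj n (A x) 1 t)) := by ring
          calc ∑ x : Fin T → Bool, (1/2:ℝ)^T * Vstar n γ (traj n (A x) 1 t)
              ≤ ∑ x : Fin T → Bool, (1/(2*(1-γ))) *
                  ((1/2:ℝ)^T + (1/2:ℝ)^T * γ ^ (n - traj n (A x) 1 t)) :=
                Finset.sum_le_sum fun x _ => hv x
            _ = (1/(2*(1-γ))) * ((∑ _x : Fin T → Bool, (1/2:ℝ)^T)
                + ∑ x : Fin T → Bool, (1/2:ℝ)^T * γ ^ (n - traj n (A x) 1 t)) := by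
                rw [← Finset.mul_sum, Finset.sum_add_distrib]
            _ ≤ (1/(2*(1-γ))) * (1 + 3/8) := by
                apply mul_le_mul_of_nonneg_left _ (by positivity)
                rw [hsum_const]
                have := key t ht
                linarith
            _ = 11/16 * (1/(1-γ)) := by rw [hhalf2]; ring
      _ = 11/16 * (1/(1-γ)) := by
          rw [Finset.sum_const, Nat.card_Icc, Nat.add_sub_cancel, nsmul_eq_mul]
          field_simp
  have he : 1/(4*(1-γ)) = 1/4 * (1/(1-γ)) := by
    rw [div_mul_div_comm]; norm_num
  have hD : (0:ℝ) < 1/(1-γ) := by positivity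
  show 1 / (1 - γ) - ∫ x : Fin T → Bool,
      (1/(T:ℝ)) * ∑ t ∈ Finset.Icc 1 T, Vstar n γ (traj n (A x) 1 t) ∂μ
      > 1 / (4 * (1 - γ))
  rw [he]
  linarith
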